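/- If Σ_{m=m₀}^∞ Φ_m(x) = 0 for some m₀ ≥ 1, then Φ_m(x) = 0 for every m ≥ m₀. -/

import Mathlib

open PowerSeries

/-- Composition `f ∘ g` of formal power series in one variable (intended for `g` with zero
constant term): the coefficient of `X^d` only involves `(coeff k f)` for `k ≤ d`. -/
noncomputable def PowerSeries.compose {F : Type*} [CommRing F] (f g : PowerSeries F) :
    PowerSeries F :=
  PowerSeries.mk fun d => ∑ k ∈ Finset.range (d + 1), coeff k f * coeff d (g ^ k)

/-- `k`-fold compositional iterate `φ^{∘k}`, with `φ^{∘0} = id = X`. -/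
noncomputable def PowerSeries.iterComp {F : Type*} [CommRing F] (φ : PowerSeries F) :
    ℕ → PowerSeries F
  | 0 => PowerSeries.X
  | k + 1 => PowerSeries.compose (PowerSeries.iterComp φ k) φ

/-- `Φ_m = ∑_{k=0}^m (-1)^k C(m,k) φ^{∘k}`. -/
noncomputable def PowerSeries.Phi {F : Type*} [CommRing F] (φ : PowerSeries F) (m : ℕ) :
    PowerSeries F :=
  ∑ k ∈ Finset.range (m + 1), ((-1 : F) ^ k * (m.choose k : F)) • PowerSeries.iterComp φ k

namespace PowerSeries

variable {F : Type*} [CommRing F]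

lemma coeff_compose (f g : PowerSeries F) (d : ℕ) :
    coeff d (compose f g) =
      ∑ k ∈ Finset.range (d + 1), coeff k f * coeff d (g ^ k) := by
  simp [compose]

lemma compose_sum {ι : Type*} (s : Finset ι) (f : ι → PowerSeries F) (g : PowerSeries F) :
    compose (∑ i ∈ s, f i) g = ∑ i ∈ s, compose (f i) g := by
  ext d
  simp only [coeff_compose, map_sum, Finset.sum_mul]
  rw [Finset.sum_comm]

lemma compose_smul (c : F) (f g : PowerSeries F) :
    compose (c • f) g = c • compose f g := by
  ext d
  simp [coeff_compose, Finset.mul_sum, mul_assoc]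

lemma Phi_succ (φ : PowerSeries F) (m : ℕ) :
    Phi φ (m + 1) = Phi φ m - compose (Phi φ m) φ := by
  have hc : compose (Phi φ m) φ
      = ∑ k ∈ Finset.range (m + 1),
          ((-1 : F) ^ k * (m.choose k : F)) • iterComp φ (k + 1) := by
    rw [Phi, compose_sum]
    simp only [compose_smul]
    rfl
  rw [hc]
  set T : ℕ → PowerSeries F := iterComp φ with hT
  set e : ℕ → F := fun k => if k = 0 then (0 : F)
      else (-1 : F) ^ (k - 1) * (m.choose (k - 1) : F) with he
  have h2 : ∑ k ∈ Finset.range (m + 1),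
      ((-1 : F) ^ k * (m.choose k : F)) • T (k + 1)
      = ∑ k ∈ Finset.range (m + 2), e k • T k := by
    rw [Finset.sum_range_succ' (fun k => e k • T k) (m + 1)]
    simp [he]
  have h1 : Phi φ m = ∑ k ∈ Finset.range (m + 2),
      ((-1 : F) ^ k * (m.choose k : F)) • T k := by
    rw [Finset.sum_range_succ, Phi]
    simp [Nat.choose_succ_self]
    rfl
  rw [h1, h2, Phi, ← Finset.sum_sub_distrib]
  apply Finset.sum_congr rfl
  intro k _
  rw [← sub_smul]
  congr 1
  cases k with
  | zero => simp [he]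
  | succ j =>
      simp only [he, Nat.add_sub_cancel, if_neg (Nat.succ_ne_zero j)]
      rw [Nat.choose_succ_succ' m j]
      push_cast
      ring

lemma Phi_telescope (φ : PowerSeries F) (m₀ : ℕ) :
    ∀ N, m₀ ≤ N + 1 →
      ∑ m ∈ Finset.Icc m₀ N, compose (Phi φ m) φ = Phi φ m₀ - Phi φ (N + 1) := by
  intro N
  induction N with
  | zero =>
      intro h
      interval_cases m₀
      · rw [Finset.Icc_self, Finset.sum_singleton, Phi_succ φ 0]
        abel
      · simp
  | succ n ih =>
      intro h
      rcases Nat.lt_or_ge (n + 1) m₀ with h' | h'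
      · have : m₀ = n + 2 := by omega
        subst this
        simp
      · rw [Finset.sum_Icc_succ_top h', ih (by omega), Phi_succ φ (n + 1)]
        abel

lemma Phi_key (φ : PowerSeries F) (n₀ : ℕ)
    (hs : ∀ d : ℕ, ∃ M : ℕ, (∀ m > M, coeff d (Phi φ m) = 0) ∧
      ∑ m ∈ Finset.Icc n₀ M, coeff d (Phi φ m) = 0) :
    Phi φ n₀ = 0 := by
  choose M hM1 hM2 using hs
  have hzero : ∀ k : ℕ, ∀ N, M k ≤ N →
      ∑ m ∈ Finset.Icc n₀ N, coeff k (Phi φ m) = 0 := by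
    intro k N hN
    rw [← Finset.sum_subset (Finset.Icc_subset_Icc_right hN)
      (fun x hx hx' => hM1 k x (by
        simp only [Finset.mem_Icc] at hx hx'
        omega))]
    exact hM2 k
  ext d
  set N : ℕ := max ((Finset.range (d + 1)).sup M) n₀ with hNdef
  have htel := Phi_telescope φ n₀ N (by omega)
  have hNk : ∀ k ∈ Finset.range (d + 1), M k ≤ N :=
    fun k hk => le_trans (Finset.le_sup hk) (le_max_left _ _)
  have hL : coeff d (∑ m ∈ Finset.Icc n₀ N, compose (Phi φ m) φ) = 0 := by
    rw [map_sum]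
    simp only [coeff_compose]
    rw [Finset.sum_comm]
    apply Finset.sum_eq_zero
    intro k hk
    rw [← Finset.sum_mul, hzero k N (hNk k hk), zero_mul]
  have hR : coeff d (Phi φ (N + 1)) = 0 :=
    hM1 d (N + 1) (by
      have := hNk d (Finset.self_mem_range_succ d)
      omega)
  rw [htel, map_sub, hR, sub_zero] at hL
  simpa using hL

end PowerSeries

/-- if the (coefficientwise convergent) sum `∑_{m=m₀}^∞ Φ_m(x)` vanishes for
some `m₀ ≥ 1`, then `Φ_m(x) = 0` for every `m ≥ m₀`. -/
theorem Phi_all_zero_of_sum_zero {F : Type*} [Field F] [CharZero F] (φ : PowerSeries F)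
    (h0 : constantCoeff φ = 0) (h1 : coeff 1 φ = 1) (m₀ : ℕ) (hm₀ : 1 ≤ m₀)
    (hsum : ∀ d : ℕ, ∃ M : ℕ, (∀ m > M, coeff d (PowerSeries.Phi φ m) = 0) ∧
      ∑ m ∈ Finset.Icc m₀ M, coeff d (PowerSeries.Phi φ m) = 0) :
    ∀ m ≥ m₀, PowerSeries.Phi φ m = 0 := by
  set P : ℕ → Prop := fun n₀ =>
    ∀ d : ℕ, ∃ M : ℕ, (∀ m > M, coeff d (PowerSeries.Phi φ m) = 0) ∧
      ∑ m ∈ Finset.Icc n₀ M, coeff d (PowerSeries.Phi φ m) = 0 with hP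
  have step : ∀ n, P n → P (n + 1) := by
    intro n hn
    have hz : PowerSeries.Phi φ n = 0 := PowerSeries.Phi_key φ n hn
    intro d
    obtain ⟨M, hM1, hM2⟩ := hn d
    refine ⟨max M n, fun m hm => hM1 m (by omega), ?_⟩
    have hext : ∑ m ∈ Finset.Icc n (max M n), coeff d (PowerSeries.Phi φ m) = 0 := by
      rw [← Finset.sum_subset (Finset.Icc_subset_Icc_right (le_max_left M n))
        (fun x hx hx' => hM1 x (by
          simp only [Finset.mem_Icc] at hx hx'
          omega))]
      exact hM2
    rw [Finset.Icc_eq_cons_Ioc (le_max_right M n), Finset.sum_cons, hz, map_zero,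
      zero_add] at hext
    rw [Finset.Icc_add_one_left_eq_Ioc]
    exact hext
  have hPall : ∀ m ≥ m₀, P m := by
    intro m hm
    induction m, hm using Nat.le_induction with
    | base => exact hsum
    | succ n hn ih => exact step n ih
  intro m hm
  exact PowerSeries.Phi_key φ m (hPall m hm)
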